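/- Let ψ : 𝔫⁺ → ℂ be a Lie algebra homomorphism with ψ(L_1) ≠ 0, ψ(L_2) ≠ 0, ψ(I_1) ≠ 0. Let k ∈ ℕ, let λ be a pseudopartition and μ a partition such that μ(i) = λ(i) = 0 for all 0 ≤ i ≤ k. Then maxdeg([L_{k+1}, L_{−λ}I_{−μ}]w) ≤ |λ| + |μ| − k − 1 in M_ψ. -/

import Mathlib

/-!
Common setup: the twisted Heisenberg–Virasoro algebra `𝒱`, its subalgebra `𝔫⁺`,
the universal Whittaker module `M_ψ`, the quotients `L_{ψ,ξ}`, and the notions of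
Whittaker vectors/modules, degrees, etc.
-/

open UniversalEnvelopingAlgebra

attribute [local instance 100] LieRing.ofAssociativeRing

/-- The twisted Heisenberg–Virasoro algebra: a complex Lie algebra with basis
`{L k, I k (k : ℤ), z 0, z 1, z 2}` (here `z 0, z 1, z 2` are the paper's `z₁, z₂, z₃`)
and the prescribed brackets. -/
class THV (V : Type) [LieRing V] [LieAlgebra ℂ V] : Type where
  L : ℤ → V
  I : ℤ → V
  z : Fin 3 → V
  basis : Module.Basis (ℤ ⊕ ℤ ⊕ Fin 3) ℂ V
  basis_L : ∀ k : ℤ, basis (Sum.inl k) = L k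
  basis_I : ∀ k : ℤ, basis (Sum.inr (Sum.inl k)) = I k
  basis_z : ∀ i : Fin 3, basis (Sum.inr (Sum.inr i)) = z i
  lie_LL : ∀ k j : ℤ, ⁅L k, L j⁆ =
    ((j : ℂ) - (k : ℂ)) • L (k + j) +
      (if j = -k then ((k : ℂ) ^ 3 - (k : ℂ)) / 12 else 0) • z 0
  lie_LI : ∀ k j : ℤ, ⁅L k, I j⁆ =
    (j : ℂ) • I (k + j) + (if j = -k then (k : ℂ) ^ 2 - (k : ℂ) else 0) • z 1
  lie_II : ∀ k j : ℤ, ⁅I k, I j⁆ = (if j = -k then (k : ℂ) else 0) • z 2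
  lie_z : ∀ i : Fin 3, ∀ x : V, ⁅z i, x⁆ = 0

namespace THV

variable (V : Type) [LieRing V] [LieAlgebra ℂ V] [THV V]

/-- `𝔫⁺ = span {L k, I k : k ≥ 1}` (a Lie subalgebra of `𝒱`). -/
def nPlus : LieSubalgebra ℂ V :=
  LieSubalgebra.lieSpan ℂ V {x | ∃ k : ℤ, 1 ≤ k ∧ (x = L k ∨ x = I k)}

theorem L_mem_nPlus {k : ℤ} (h : 1 ≤ k) : (L k : V) ∈ nPlus V :=
  LieSubalgebra.subset_lieSpan ⟨k, h, Or.inl rfl⟩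

theorem I_mem_nPlus {k : ℤ} (h : 1 ≤ k) : (I k : V) ∈ nPlus V :=
  LieSubalgebra.subset_lieSpan ⟨k, h, Or.inr rfl⟩

/-- A Whittaker vector of type `ψ` in a `𝒱`-module `W`. -/
def IsWhittakerVector (ψ : nPlus V →ₗ⁅ℂ⁆ ℂ) {W : Type} [AddCommGroup W] [Module ℂ W]
    [LieRingModule V W] (w : W) : Prop :=
  ∀ x : nPlus V, ⁅(x : V), w⁆ = ψ x • w

/-- The universal enveloping algebra `U(𝒱)`. -/
abbrev UEA := UniversalEnvelopingAlgebra ℂ V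

/-- The canonical embedding `𝒱 → U(𝒱)`. -/
noncomputable def ιV : V →ₗ⁅ℂ⁆ UEA V := UniversalEnvelopingAlgebra.ι ℂ

/-- The four central elements `z₀ = I₀, z₁, z₂, z₃` of `U(𝒱)`. -/
noncomputable def zElt : Fin 4 → UEA V
  | 0 => ιV V (I 0)
  | 1 => ιV V (z 0)
  | 2 => ιV V (z 1)
  | 3 => ιV V (z 2)

/-- The left ideal of `U(𝒱)` generated by `{x - ψ(x) : x ∈ 𝔫⁺}`;
`M_ψ = U(𝒱) ⊗_{U(𝔫⁺)} ℂ_ψ` is canonically the quotient by this left ideal. -/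
noncomputable def whittakerIdeal (ψ : nPlus V →ₗ⁅ℂ⁆ ℂ) : Submodule (UEA V) (UEA V) :=
  Submodule.span (UEA V)
    {u | ∃ x : nPlus V, u = ιV V (x : V) - algebraMap ℂ (UEA V) (ψ x)}

/-- The universal Whittaker module `M_ψ`. -/
abbrev Mpsi (ψ : nPlus V →ₗ⁅ℂ⁆ ℂ) := (UEA V) ⧸ whittakerIdeal V ψ

/-- Any quotient of `U(𝒱)` (as a left module over itself) is a `𝒱`-module. -/
noncomputable instance (p : Submodule (UEA V) (UEA V)) : LieRingModule V ((UEA V) ⧸ p) :=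
  letI : LieRingModule (UEA V) ((UEA V) ⧸ p) := LieRingModule.ofAssociativeModule
  LieRingModule.compLieHom _ (ιV V)

noncomputable instance (p : Submodule (UEA V) (UEA V)) : LieModule ℂ V ((UEA V) ⧸ p) :=
  letI : LieRingModule (UEA V) ((UEA V) ⧸ p) := LieRingModule.ofAssociativeModule
  letI : LieModule ℂ (UEA V) ((UEA V) ⧸ p) := LieModule.ofAssociativeModule
  LieModule.compLieHom _ (ιV V)

/-- The cyclic Whittaker vector `w = 1 ⊗ 1` of `M_ψ`. -/
noncomputable def mw (ψ : nPlus V →ₗ⁅ℂ⁆ ℂ) : Mpsi V ψ :=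
  Submodule.Quotient.mk 1

/-- The submodule `Σ_{i} (z_i − ξ_i·1) M_ψ` of `M_ψ`. -/
noncomputable def centralSub (ψ : nPlus V →ₗ⁅ℂ⁆ ℂ) (ξ : Fin 4 → ℂ) :
    Submodule (UEA V) (Mpsi V ψ) :=
  Submodule.span (UEA V)
    {m | ∃ i : Fin 4, ∃ y : Mpsi V ψ, m = (zElt V i - algebraMap ℂ (UEA V) (ξ i)) • y}

/-- The Whittaker module `L_{ψ,ξ} = M_ψ / Σᵢ (z_i − ξ_i·1) M_ψ`. -/
abbrev Lpsixi (ψ : nPlus V →ₗ⁅ℂ⁆ ℂ) (ξ : Fin 4 → ℂ) :=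
  Mpsi V ψ ⧸ centralSub V ψ ξ

noncomputable instance (ψ : nPlus V →ₗ⁅ℂ⁆ ℂ) (q : Submodule (UEA V) (Mpsi V ψ)) :
    LieRingModule V ((Mpsi V ψ) ⧸ q) :=
  letI : LieRingModule (UEA V) ((Mpsi V ψ) ⧸ q) := LieRingModule.ofAssociativeModule
  LieRingModule.compLieHom _ (ιV V)

noncomputable instance (ψ : nPlus V →ₗ⁅ℂ⁆ ℂ) (q : Submodule (UEA V) (Mpsi V ψ)) :
    LieModule ℂ V ((Mpsi V ψ) ⧸ q) :=
  letI : LieRingModule (UEA V) ((Mpsi V ψ) ⧸ q) := LieRingModule.ofAssociativeModule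
  letI : LieModule ℂ (UEA V) ((Mpsi V ψ) ⧸ q) := LieModule.ofAssociativeModule
  LieModule.compLieHom _ (ιV V)

/-- The image `w̄` of the cyclic Whittaker vector in `L_{ψ,ξ}`. -/
noncomputable def lw (ψ : nPlus V →ₗ⁅ℂ⁆ ℂ) (ξ : Fin 4 → ℂ) : Lpsixi V ψ ξ :=
  Submodule.Quotient.mk (mw V ψ)

/-- The size `|λ|` of a pseudopartition recorded as its multiplicity function. -/
def pdeg (f : ℕ →₀ ℕ) : ℕ := f.sum fun k m => k * m

/-- `L_{-λ} = L_{-λ_s} ⋯ L_{-λ_1} = ⋯ L_{-1}^{λ(1)} L_0^{λ(0)} ∈ U(𝒱)`,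
for a pseudopartition `λ` given by its multiplicity function. -/
noncomputable def Lword (lam : ℕ →₀ ℕ) : UEA V :=
  (((List.range (lam.support.sup id + 1)).reverse).map
    fun k : ℕ => (ιV V (L (-(k : ℤ)))) ^ (lam k)).prod

/-- `I_{-μ} = I_{-μ_r} ⋯ I_{-μ_1} = ⋯ I_{-2}^{μ(2)} I_{-1}^{μ(1)} ∈ U(𝒱)`. -/
noncomputable def Iword (mu : ℕ →₀ ℕ) : UEA V :=
  (((List.range (mu.support.sup id + 1)).reverse).map
    fun k : ℕ => (ιV V (I (-(k : ℤ)))) ^ (mu k)).prod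

/-- `z^t = z₀^{t₀} z₁^{t₁} z₂^{t₂} z₃^{t₃} ∈ U(𝒱)`. -/
noncomputable def zword (t : Fin 4 → ℕ) : UEA V :=
  ((List.finRange 4).map fun i => (zElt V i) ^ (t i)).prod

/-- Index type for the PBW-type basis of `M_ψ`: a 4-tuple `t`, a pseudopartition `λ`,
and a partition `μ` (a multiplicity function with `μ(0) = 0`). -/
abbrev WIdx : Type := (Fin 4 → ℕ) × (ℕ →₀ ℕ) × {g : ℕ →₀ ℕ // g 0 = 0}

/-- The property that `B` is the standard basis `{z^t L_{-λ} I_{-μ} w}` of `M_ψ`. -/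
def IsStdBasis (ψ : nPlus V →ₗ⁅ℂ⁆ ℂ) (B : Module.Basis WIdx ℂ (Mpsi V ψ)) : Prop :=
  ∀ (t : Fin 4 → ℕ) (lam : ℕ →₀ ℕ) (mu : {g : ℕ →₀ ℕ // g 0 = 0}),
    B (t, lam, mu) = (zword V t * Lword V lam * Iword V mu.1) • mw V ψ

/-- `maxdeg` of a vector of `M_ψ` with respect to the standard basis
(`⊥` plays the role of `-∞`). -/
noncomputable def maxdeg (ψ : nPlus V →ₗ⁅ℂ⁆ ℂ) (B : Module.Basis WIdx ℂ (Mpsi V ψ))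
    (v : Mpsi V ψ) : WithBot ℤ :=
  ((B.repr v).support.image fun p => ((pdeg p.2.1 : ℤ) + (pdeg p.2.2.1 : ℤ))).max

/-- `max_{L_0}` of a vector of `M_ψ`: the largest `λ(0)` over basis vectors occurring
with a nonzero coefficient. -/
noncomputable def maxL0 (ψ : nPlus V →ₗ⁅ℂ⁆ ℂ) (B : Module.Basis WIdx ℂ (Mpsi V ψ))
    (v : Mpsi V ψ) : WithBot ℤ :=
  ((B.repr v).support.image fun p => (p.2.1 0 : ℤ)).max


section Aux
open THV
set_option linter.unusedSectionVars false
variable (V : Type) [LieRing V] [LieAlgebra ℂ V] [THV V]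

lemma iota_lie (x y : V) : ⁅ιV V x, ιV V y⁆ = ιV V ⁅x, y⁆ := ((ιV V).map_lie x y).symm

lemma iota_commute {x y : V} (h : ⁅x, y⁆ = 0) : Commute (ιV V x) (ιV V y) := by
  have h1 := iota_lie V x y
  rw [h, Ring.lie_def, map_zero] at h1
  exact sub_eq_zero.mp h1

lemma lie_I0_left (x : V) : ⁅(I 0 : V), x⁆ = 0 := by
  have hb : ∀ i, ⁅(I 0 : V), (THV.basis i : V)⁆ = 0 := by
    rintro (k | k | i)
    · rw [basis_L, ← lie_skew, lie_LI]
      rcases eq_or_ne k 0 with rfl | hk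
      · simp
      · have : ¬ ((0:ℤ) = -k) := by omega
        simp [this]
    · rw [basis_I, lie_II]
      rcases eq_or_ne (k:ℤ) 0 with hk | hk
      · simp [hk]
      · have : ¬ ((k:ℤ) = -(0:ℤ)) := by omega
        simp [this]
    · rw [basis_z, ← lie_skew, lie_z]; simp
  have hx : x ∈ Submodule.span ℂ (Set.range (THV.basis : Module.Basis (ℤ ⊕ ℤ ⊕ Fin 3) ℂ V)) := by
    rw [Module.Basis.span_eq]; trivial
  induction hx using Submodule.span_induction with
  | mem y hy => obtain ⟨i, rfl⟩ := hy; exact hb i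
  | zero => simp
  | add y z _ _ hy hz => rw [lie_add, hy, hz, add_zero]
  | smul c y _ hy => rw [lie_smul, hy, smul_zero]

lemma lie_z_right (i : Fin 3) (x : V) : ⁅x, (z i : V)⁆ = 0 := by
  rw [← lie_skew, lie_z, neg_zero]

lemma zElt_commute_iota (i : Fin 4) (x : V) : Commute (zElt V i) (ιV V x) := by
  fin_cases i
  · exact iota_commute V (lie_I0_left V x)
  · exact iota_commute V (lie_z 0 x)
  · exact iota_commute V (lie_z 1 x)
  · exact iota_commute V (lie_z 2 x)

end Aux

section Aux2
open THV List
set_option linter.unusedSectionVars false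
variable (V : Type) [LieRing V] [LieAlgebra ℂ V] [THV V]

/-- `L_{-i}` in `U(𝒱)` for `i : ℕ`. -/
noncomputable def Lgen (i : ℕ) : UEA V := ιV V (L (-(i : ℤ)))
/-- `I_{-i}` in `U(𝒱)` for `i : ℕ`. -/
noncomputable def Igen (i : ℕ) : UEA V := ιV V (I (-(i : ℤ)))
/-- product of `L_{-i}` over a list. -/
noncomputable def Lprod (a : List ℕ) : UEA V := (a.map (Lgen V)).prod
/-- product of `I_{-i}` over a list. -/
noncomputable def Iprod (a : List ℕ) : UEA V := (a.map (Igen V)).prod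

@[simp] lemma Lprod_nil : Lprod V [] = 1 := rfl
@[simp] lemma Iprod_nil : Iprod V [] = 1 := rfl
@[simp] lemma Lprod_cons (i : ℕ) (a : List ℕ) :
    Lprod V (i :: a) = Lgen V i * Lprod V a := by simp [Lprod]
@[simp] lemma Iprod_cons (i : ℕ) (a : List ℕ) :
    Iprod V (i :: a) = Igen V i * Iprod V a := by simp [Iprod]
lemma Lprod_append (a b : List ℕ) : Lprod V (a ++ b) = Lprod V a * Lprod V b := by
  simp [Lprod]
lemma Iprod_append (a b : List ℕ) : Iprod V (a ++ b) = Iprod V a * Iprod V b := by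
  simp [Iprod]
lemma Lprod_replicate (m i : ℕ) : Lprod V (List.replicate m i) = (Lgen V i) ^ m := by
  simp [Lprod, List.map_replicate, List.prod_replicate]
lemma Iprod_replicate (m i : ℕ) : Iprod V (List.replicate m i) = (Igen V i) ^ m := by
  simp [Iprod, List.map_replicate, List.prod_replicate]

lemma Igen_commute (i j : ℕ) : Commute (Igen V i) (Igen V j) := by
  apply iota_commute
  rw [lie_II]
  by_cases hc : (-(j:ℤ)) = -(-(i:ℤ))
  · have hi : i = 0 := by omega
    subst hi
    simp
  · rw [if_neg hc, zero_smul]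

lemma Igen_zero : Igen V 0 = zElt V 0 := by simp [Igen, zElt]

/-- the canonical (descending) list of a multiplicity function. -/
def cList (f : ℕ →₀ ℕ) (n : ℕ) : List ℕ :=
  (List.range n).reverse.flatMap fun k => List.replicate (f k) k

lemma cList_succ (f : ℕ →₀ ℕ) (n : ℕ) :
    cList f (n + 1) = List.replicate (f n) n ++ cList f n := by
  rw [cList, cList, List.range_succ, List.reverse_append]
  simp [List.flatMap_cons]

lemma Lprod_cList (f : ℕ →₀ ℕ) (n : ℕ) :
    Lprod V (cList f n) = (((List.range n).reverse).map
      fun k : ℕ => (ιV V (L (-(k : ℤ)))) ^ (f k)).prod := by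
  rw [cList, Lprod, List.flatMap_def, List.map_flatten, List.prod_flatten]
  rw [List.map_map, List.map_map]
  congr 1
  refine List.map_congr_left (fun k _ => ?_)
  show Lprod V (List.replicate (f k) k) = _
  rw [Lprod_replicate]
  rfl

lemma Iprod_cList (f : ℕ →₀ ℕ) (n : ℕ) :
    Iprod V (cList f n) = (((List.range n).reverse).map
      fun k : ℕ => (ιV V (I (-(k : ℤ)))) ^ (f k)).prod := by
  rw [cList, Iprod, List.flatMap_def, List.map_flatten, List.prod_flatten]
  rw [List.map_map, List.map_map]
  congr 1
  refine List.map_congr_left (fun k _ => ?_)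
  show Iprod V (List.replicate (f k) k) = _
  rw [Iprod_replicate]
  rfl

lemma Lword_eq_Lprod (f : ℕ →₀ ℕ) :
    Lword V f = Lprod V (cList f (f.support.sup id + 1)) := (Lprod_cList V f _).symm

lemma Iword_eq_Iprod (f : ℕ →₀ ℕ) :
    Iword V f = Iprod V (cList f (f.support.sup id + 1)) := (Iprod_cList V f _).symm

lemma support_lt (f : ℕ →₀ ℕ) {i : ℕ} (hi : 0 < f i) : i < f.support.sup id + 1 := by
  have h1 : i ∈ f.support := Finsupp.mem_support_iff.2 (by omega)
  have h2 := Finset.le_sup (f := id) h1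
  simp only [id_eq] at h2
  omega

lemma cList_sum (f : ℕ →₀ ℕ) (n : ℕ) (hn : ∀ i, 0 < f i → i < n) :
    (cList f n).sum = pdeg f := by
  have key : ∀ m : ℕ, (cList f m).sum = ∑ k ∈ Finset.range m, k * f k := by
    intro m
    induction m with
    | zero => simp [cList]
    | succ m ih =>
      rw [cList_succ, List.sum_append, ih, List.sum_replicate, Finset.sum_range_succ]
      simp [mul_comm]; ring
  rw [key n, pdeg]
  rw [Finsupp.sum_of_support_subset f (s := Finset.range n) ?hs _ (by simp)]
  intro i hi
  rw [Finset.mem_range]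
  exact hn i (Nat.pos_of_ne_zero (Finsupp.mem_support_iff.1 hi))

lemma count_cList (f : ℕ →₀ ℕ) (n : ℕ) (i : ℕ) :
    (cList f n).count i = if i < n then f i else 0 := by
  induction n with
  | zero => simp [cList]
  | succ n ih =>
    rw [cList_succ, List.count_append, ih, List.count_replicate]
    by_cases h1 : i = n
    · subst h1; simp
    · by_cases h2 : i < n
      · have : i < n + 1 := by omega
        simp [this, h2, Ne.symm h1]
      · have h3 : ¬ (i < n + 1) := by omega
        simp [h2, h3, Ne.symm h1]

lemma mem_cList {f : ℕ →₀ ℕ} {n : ℕ} {i : ℕ} (hi : i ∈ cList f n) : 0 < f i := by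
  have := count_cList f n i
  have hc : 0 < (cList f n).count i := List.count_pos_iff.2 hi
  by_cases h : i < n
  · rw [if_pos h] at this; omega
  · rw [if_neg h] at this; omega

end Aux2

section Aux3
open THV List
set_option linter.unusedSectionVars false
variable (V : Type) [LieRing V] [LieAlgebra ℂ V] [THV V]

lemma commute_listprod {u : UEA V} {l : List (UEA V)} (h : ∀ y ∈ l, Commute u y) :
    Commute u l.prod := Commute.list_prod_right _ _ h

lemma central_commute_Lprod {u : UEA V} (h : ∀ y : V, Commute u (ιV V y)) (a : List ℕ) :
    Commute u (Lprod V a) := by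
  apply commute_listprod
  intro y hy
  rw [List.mem_map] at hy
  obtain ⟨i, -, rfl⟩ := hy
  exact h _

lemma central_commute_Iprod {u : UEA V} (h : ∀ y : V, Commute u (ιV V y)) (a : List ℕ) :
    Commute u (Iprod V a) := by
  apply commute_listprod
  intro y hy
  rw [List.mem_map] at hy
  obtain ⟨i, -, rfl⟩ := hy
  exact h _

lemma central_commute_Lword {u : UEA V} (h : ∀ y : V, Commute u (ιV V y)) (f : ℕ →₀ ℕ) :
    Commute u (Lword V f) := by
  rw [Lword_eq_Lprod]; exact central_commute_Lprod V h _

lemma central_commute_Iword {u : UEA V} (h : ∀ y : V, Commute u (ιV V y)) (f : ℕ →₀ ℕ) :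
    Commute u (Iword V f) := by
  rw [Iword_eq_Iprod]; exact central_commute_Iprod V h _

lemma central_commute_zword {u : UEA V} (h : ∀ y : V, Commute u (ιV V y)) (t : Fin 4 → ℕ) :
    Commute u (zword V t) := by
  apply commute_listprod
  intro y hy
  rw [List.mem_map] at hy
  obtain ⟨i, -, rfl⟩ := hy
  refine Commute.pow_right ?_ _
  fin_cases i <;> exact h _

lemma zElt_commute (i : Fin 4) : ∀ y : V, Commute (zElt V i) (ιV V y) :=
  zElt_commute_iota V i

@[simp] lemma zword_zero : zword V (fun _ => 0) = 1 := by
  simp [zword]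

lemma zElt_is_iota (i : Fin 4) : ∃ x : V, zElt V i = ιV V x := by
  fin_cases i <;> exact ⟨_, rfl⟩

lemma zElt_commute_zElt (a b : Fin 4) : Commute (zElt V a) (zElt V b) := by
  obtain ⟨x, hx⟩ := zElt_is_iota V b
  rw [hx]
  exact zElt_commute_iota V a x

lemma zword_eq (t : Fin 4 → ℕ) :
    zword V t = zElt V 0 ^ t 0 * (zElt V 1 ^ t 1 * (zElt V 2 ^ t 2 * (zElt V 3 ^ t 3 * 1))) :=
  rfl

lemma zword_update (t : Fin 4 → ℕ) (i : Fin 4) :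
    zword V (Function.update t i (t i + 1)) = zElt V i * zword V t := by
  have hzz := zElt_commute_zElt V
  fin_cases i
  · show zword V (Function.update t 0 (t 0 + 1)) = zElt V 0 * zword V t
    rw [zword_eq, zword_eq, Function.update_self,
      Function.update_of_ne (by decide : (1:Fin 4) ≠ 0),
      Function.update_of_ne (by decide : (2:Fin 4) ≠ 0),
      Function.update_of_ne (by decide : (3:Fin 4) ≠ 0), pow_succ']
    simp only [mul_one, mul_assoc]
  · show zword V (Function.update t 1 (t 1 + 1)) = zElt V 1 * zword V t
    rw [zword_eq, zword_eq, Function.update_self,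
      Function.update_of_ne (by decide : (0:Fin 4) ≠ 1),
      Function.update_of_ne (by decide : (2:Fin 4) ≠ 1),
      Function.update_of_ne (by decide : (3:Fin 4) ≠ 1), pow_succ']
    simp only [mul_one, mul_assoc]
    rw [((hzz 1 0).pow_right (t 0)).left_comm]
  · show zword V (Function.update t 2 (t 2 + 1)) = zElt V 2 * zword V t
    rw [zword_eq, zword_eq, Function.update_self,
      Function.update_of_ne (by decide : (0:Fin 4) ≠ 2),
      Function.update_of_ne (by decide : (1:Fin 4) ≠ 2),
      Function.update_of_ne (by decide : (3:Fin 4) ≠ 2), pow_succ']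
    simp only [mul_one, mul_assoc]
    rw [((hzz 2 0).pow_right (t 0)).left_comm, ((hzz 2 1).pow_right (t 1)).left_comm]
  · show zword V (Function.update t 3 (t 3 + 1)) = zElt V 3 * zword V t
    rw [zword_eq, zword_eq, Function.update_self,
      Function.update_of_ne (by decide : (0:Fin 4) ≠ 3),
      Function.update_of_ne (by decide : (1:Fin 4) ≠ 3),
      Function.update_of_ne (by decide : (2:Fin 4) ≠ 3), pow_succ']
    simp only [mul_one, mul_assoc]
    rw [((hzz 3 0).pow_right (t 0)).left_comm, ((hzz 3 1).pow_right (t 1)).left_comm,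
      ((hzz 3 2).pow_right (t 2)).left_comm]

end Aux3

section Aux4
open THV List
set_option linter.unusedSectionVars false
variable (V : Type) [LieRing V] [LieAlgebra ℂ V] [THV V]

/-- total degree of a basis index. -/
def degIdx (p : WIdx) : ℤ := (pdeg p.2.1 : ℤ) + (pdeg p.2.2.1 : ℤ)

variable (ψ : nPlus V →ₗ⁅ℂ⁆ ℂ) (B : Module.Basis WIdx ℂ (Mpsi V ψ))

/-- the degree filtration of `M_ψ`. -/
noncomputable def FF (d : ℤ) : Submodule ℂ (Mpsi V ψ) :=
  Submodule.span ℂ (B '' {p | degIdx p ≤ d})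

lemma FF_mono {d e : ℤ} (h : d ≤ e) : FF V ψ B d ≤ FF V ψ B e :=
  Submodule.span_mono (Set.image_mono fun p hp => le_trans hp h)

lemma mem_FF_of_le {p : WIdx} {d : ℤ} (h : degIdx p ≤ d) : B p ∈ FF V ψ B d :=
  Submodule.subset_span ⟨p, h, rfl⟩

lemma maxdeg_le_of_mem_FF {v : Mpsi V ψ} {d : ℤ} (h : v ∈ FF V ψ B d) :
    maxdeg V ψ B v ≤ (d : WithBot ℤ) := by
  rw [FF] at h
  rw [Module.Basis.mem_span_image] at h
  refine Finset.max_le ?_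
  intro x hx
  rw [Finset.mem_image] at hx
  obtain ⟨p, hp, rfl⟩ := hx
  exact_mod_cast WithBot.coe_le_coe.2 (h hp)

/-- multiplicity function of a list. -/
noncomputable def listToF (c : List ℕ) : ℕ →₀ ℕ := Multiset.toFinsupp (↑c)

lemma listToF_apply (c : List ℕ) (k : ℕ) : listToF c k = c.count k := by
  simp [listToF]

lemma pdeg_listToF (c : List ℕ) : pdeg (listToF c) = c.sum := by
  induction c with
  | nil => simp [pdeg, listToF]
  | cons a c ih =>
    have h1 : listToF (a :: c) = listToF c + Finsupp.single a 1 := by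
      ext k
      rcases eq_or_ne k a with rfl | hk
      · simp [listToF_apply, List.count_cons]
      · simp [listToF_apply, List.count_cons, Ne.symm hk, hk]
    rw [h1, pdeg, Finsupp.sum_add_index' (by simp) (fun a b c => by ring), ← pdeg, ih,
      Finsupp.sum_single_index (by simp)]
    simp [List.sum_cons]; ring
  
lemma sorted_decomp (n : ℕ) : ∀ (c : List ℕ), c.Pairwise (· ≥ ·) → (∀ x ∈ c, x ≤ n) →
    c = List.replicate (c.count n) n ++ c.filter (fun x => x ≠ n) := by
  intro c
  induction c with
  | nil => simp
  | cons a c ih =>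
    intro hs hle
    rw [List.pairwise_cons] at hs
    rcases eq_or_ne a n with rfl | ha
    · have hc := ih hs.2 (fun x hx => hle x (List.mem_cons_of_mem _ hx))
      rw [List.count_cons_self, List.replicate_succ, List.cons_append,
        List.filter_cons_of_neg (by simp)]
      exact congrArg (List.cons a) hc
    · have hcount : (a :: c).count n = 0 := by
        rw [List.count_eq_zero]
        intro hmem
        rcases List.mem_cons.1 hmem with h | h
        · exact ha h.symm
        · have h1 := hs.1 n h
          have h2 := hle a (List.mem_cons_self)
          omega
      rw [hcount, List.replicate_zero, List.nil_append]
      symm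
      rw [List.filter_eq_self]
      intro x hx
      rcases List.mem_cons.1 hx with rfl | h
      · simpa using ha
      · have h1 := hs.1 x h
        have h2 := hle a (List.mem_cons_self)
        have h3 : x ≠ n := by omega
        simpa using h3

lemma gen_sorted_bucket (g : ℕ → UEA V) : ∀ (n : ℕ) (c : List ℕ), c.Pairwise (· ≥ ·) →
    (∀ x ∈ c, x < n) →
    (c.map g).prod = (((List.range n).reverse).map fun k => g k ^ (c.count k)).prod := by
  intro n
  induction n with
  | zero =>
    intro c _ h
    have : c = [] := List.eq_nil_iff_forall_not_mem.2 (fun x hx => by have := h x hx; omega)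
    simp [this]
  | succ n ih =>
    intro c hs hlt
    have hrev : (List.range (n+1)).reverse = n :: (List.range n).reverse := by
      rw [List.range_succ, List.reverse_append]; rfl
    rw [hrev, List.map_cons, List.prod_cons]
    set r := c.filter (fun x => x ≠ n) with hr
    have hdec := sorted_decomp n c hs (fun x hx => by have := hlt x hx; omega)
    rw [← hr] at hdec
    have hrs : r.Pairwise (· ≥ ·) := hs.filter _
    have hrlt : ∀ x ∈ r, x < n := by
      intro x hx
      rw [hr, List.mem_filter] at hx
      have h1 := hlt x hx.1
      have h2 : x ≠ n := by simpa using hx.2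
      omega
    have hcnt : ∀ k, k < n → r.count k = c.count k := by
      intro k hk
      conv_rhs => rw [hdec]
      rw [List.count_append, List.count_replicate]
      have hnk : ¬ (n = k) := by omega
      simp [hnk]
    calc (c.map g).prod = ((List.replicate (c.count n) n ++ r).map g).prod := by rw [← hdec]
      _ = g n ^ (c.count n) * (r.map g).prod := by
          rw [List.map_append, List.prod_append, List.map_replicate, List.prod_replicate]
      _ = _ := by
          rw [ih r hrs hrlt]
          refine congrArg (fun q => g n ^ (c.count n) * q)
            (congrArg (fun l : List (UEA V) => l.prod) (List.map_congr_left (fun k hk => ?_)))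

          rw [List.mem_reverse, List.mem_range] at hk
          rw [hcnt k hk]

lemma count_lt_supbound {c : List ℕ} {x : ℕ} (hx : x ∈ c) :
    x < (listToF c).support.sup id + 1 := by
  apply support_lt
  rw [listToF_apply]
  exact List.count_pos_iff.2 hx

lemma Lprod_sorted_eq_Lword {c : List ℕ} (hs : c.Pairwise (· ≥ ·)) :
    Lprod V c = Lword V (listToF c) := by
  show (c.map (Lgen V)).prod = _
  rw [gen_sorted_bucket V (Lgen V) ((listToF c).support.sup id + 1) c hs
    (fun x hx => count_lt_supbound hx)]
  show _ = Lword V (listToF c)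
  rw [Lword]
  congr 1
  refine List.map_congr_left (fun k _ => ?_)
  rw [listToF_apply]
  rfl

lemma Iprod_sorted_eq_Iword {c : List ℕ} (hs : c.Pairwise (· ≥ ·)) :
    Iprod V c = Iword V (listToF c) := by
  show (c.map (Igen V)).prod = _
  rw [gen_sorted_bucket V (Igen V) ((listToF c).support.sup id + 1) c hs
    (fun x hx => count_lt_supbound hx)]
  show _ = Iword V (listToF c)
  rw [Iword]
  congr 1
  refine List.map_congr_left (fun k _ => ?_)
  rw [listToF_apply]
  rfl

end Aux4

section Aux5
open THV List
set_option linter.unusedSectionVars false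
variable (V : Type) [LieRing V] [LieAlgebra ℂ V] [THV V]

example (ψ : nPlus V →ₗ⁅ℂ⁆ ℂ) (c : ℂ) (u : UEA V) (m : Mpsi V ψ) :
    (c • u) • m = c • (u • m) := smul_assoc c u m

lemma Lgen_swap (i j : ℕ) :
    Lgen V i * Lgen V j = Lgen V j * Lgen V i + ((i : ℂ) - (j : ℂ)) • Lgen V (i + j) := by
  have h := iota_lie V (L (-(i:ℤ))) (L (-(j:ℤ)))
  rw [Ring.lie_def, lie_LL] at h
  by_cases hc : (-(j:ℤ)) = -(-(i:ℤ))
  · have hi : i = 0 := by omega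
    have hj : j = 0 := by omega
    subst hi; subst hj
    simp
  · rw [if_neg hc, zero_smul, add_zero] at h
    have hcast : (-(i:ℤ)) + (-(j:ℤ)) = -((i + j : ℕ) : ℤ) := by push_cast; ring
    rw [hcast] at h
    rw [map_smul] at h
    have h2 := sub_eq_iff_eq_add.1 h
    rw [add_comm] at h2
    show Lgen V i * Lgen V j = _
    rw [Lgen, Lgen, h2]
    congr 2
    push_cast
    ring

/-- set of products of sorted lists with a given multiset. -/
def S1 (a : List ℕ) : Set (UEA V) :=
  {u | ∃ c : List ℕ, c.Pairwise (· ≥ ·) ∧ (c : Multiset ℕ) = (a : Multiset ℕ) ∧ u = Lprod V c}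

/-- set of products of shorter lists with given sum. -/
def S2 (s n : ℕ) : Set (UEA V) :=
  {u | ∃ b : List ℕ, b.sum = s ∧ b.length ≤ n ∧ u = Lprod V b}

lemma insert_mem : ∀ (a : List ℕ), a.Pairwise (· ≥ ·) → ∀ i : ℕ,
    Lprod V (i :: a) ∈ Submodule.span ℂ (S1 V (i :: a) ∪ S2 V (i + a.sum) a.length) := by
  intro a
  induction a with
  | nil =>
    intro _ i
    exact Submodule.subset_span (Or.inl ⟨[i], by simp, rfl, rfl⟩)
  | cons j a ih =>
    intro hs i
    rw [List.pairwise_cons] at hs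
    rcases le_or_gt j i with hji | hij
    · refine Submodule.subset_span (Or.inl ⟨i :: j :: a, ?_, rfl, rfl⟩)
      rw [List.pairwise_cons]
      refine ⟨?_, by rw [List.pairwise_cons]; exact hs⟩
      intro b hb
      rcases List.mem_cons.1 hb with rfl | h
      · exact hji
      · exact le_trans (hs.1 b h) hji
    · have key : Lprod V (i :: j :: a)
          = Lgen V j * Lprod V (i :: a) + ((i:ℂ) - (j:ℂ)) • Lprod V ((i + j) :: a) := by
        rw [Lprod_cons, Lprod_cons, Lprod_cons, Lprod_cons, ← mul_assoc, ← mul_assoc,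
          Lgen_swap V i j]
        rw [add_mul, smul_mul_assoc]
      rw [key]
      refine Submodule.add_mem _ ?_ (Submodule.smul_mem _ _ ?_)
      · -- Lgen j * (span elements)
        have hmem := ih hs.2 i
        refine Submodule.span_induction ?mem ?zero ?add ?smul hmem
        case mem =>
          intro u hu
          rcases hu with ⟨c, hcs, hcm, rfl⟩ | ⟨b, hbs, hbl, rfl⟩
          · -- sorted c, multiset = i :: a ; j :: c is sorted
            refine Submodule.subset_span (Or.inl ⟨j :: c, ?_, ?_, by rw [Lprod_cons]⟩)
            · rw [List.pairwise_cons]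
              refine ⟨?_, hcs⟩
              intro b hb
              have hbm : b ∈ (i ::ₘ (a : Multiset ℕ)) := by
                have : b ∈ (c : Multiset ℕ) := by exact_mod_cast hb
                rw [hcm] at this
                simpa using this
              rcases Multiset.mem_cons.1 hbm with rfl | h
              · exact le_of_lt hij
              · exact hs.1 b (by exact_mod_cast h)
            · show (j ::ₘ (c : Multiset ℕ)) = (i ::ₘ j ::ₘ (a : Multiset ℕ))
              rw [hcm]
              show (j ::ₘ i ::ₘ (a : Multiset ℕ)) = _
              exact Multiset.cons_swap j i _
          · -- shorter b
            refine Submodule.subset_span (Or.inr ⟨j :: b, ?_, ?_, by rw [Lprod_cons]⟩)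
            · simp [hbs, List.sum_cons]; ring
            · simpa using hbl
        case zero => simp
        case add =>
          intro u v _ _ hu hv
          rw [mul_add]
          exact Submodule.add_mem _ hu hv
        case smul =>
          intro c u _ hu
          rw [mul_smul_comm]
          exact Submodule.smul_mem _ _ hu
      · refine Submodule.subset_span (Or.inr ⟨(i + j) :: a, ?_, by simp, ?_⟩)
        · simp [List.sum_cons]; ring
        · rfl

lemma sort_mem : ∀ (a : List ℕ),
    Lprod V a ∈ Submodule.span ℂ (S1 V a ∪
      {u | ∃ b : List ℕ, b.sum = a.sum ∧ b.length < a.length ∧ u = Lprod V b}) := by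
  intro a
  induction a with
  | nil => exact Submodule.subset_span (Or.inl ⟨[], by simp, rfl, rfl⟩)
  | cons i a ih =>
    rw [Lprod_cons]
    refine Submodule.span_induction ?mem ?zero ?add ?smul ih
    case mem =>
      intro u hu
      rcases hu with ⟨c, hcs, hcm, rfl⟩ | ⟨b, hbs, hbl, rfl⟩
      · -- sorted c perm of a; use insert_mem on (i :: c)
        have key := insert_mem V c hcs i
        rw [← Lprod_cons]
        refine Submodule.span_le.2 ?_ key
        rintro u (⟨e, hes, hem, rfl⟩ | ⟨b, hbs, hbl, rfl⟩)
        · refine Submodule.subset_span (Or.inl ⟨e, hes, ?_, rfl⟩)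
          rw [hem]
          show (i ::ₘ (c : Multiset ℕ)) = (i ::ₘ (a : Multiset ℕ))
          rw [hcm]
        · refine Submodule.subset_span (Or.inr ⟨b, ?_, ?_, rfl⟩)
          · have hsum : c.sum = a.sum := by
              have : (c : Multiset ℕ).sum = (a : Multiset ℕ).sum := by rw [hcm]
              simpa using this
            simp [hbs, hsum, List.sum_cons]
          · have hlen : c.length = a.length := by
              have : (c : Multiset ℕ).card = (a : Multiset ℕ).card := by rw [hcm]
              simpa using this
            simp only [List.length_cons]
            omega
      · -- shorter list b
        rw [← Lprod_cons]
        refine Submodule.subset_span (Or.inr ⟨i :: b, ?_, ?_, rfl⟩)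
        · simp [hbs, List.sum_cons]
        · simp only [List.length_cons]; omega
    case zero => simp
    case add =>
      intro u v _ _ hu hv
      rw [mul_add]
      exact Submodule.add_mem _ hu hv
    case smul =>
      intro c u _ hu
      rw [mul_smul_comm]
      exact Submodule.smul_mem _ _ hu

end Aux5

section Aux6
open THV List
set_option linter.unusedSectionVars false
variable (V : Type) [LieRing V] [LieAlgebra ℂ V] [THV V]

lemma pairwise_commute_map_Igen (l : List ℕ) : (l.map (Igen V)).Pairwise Commute := by
  induction l with
  | nil => simp
  | cons i l ih =>
    rw [List.map_cons, List.pairwise_cons]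
    refine ⟨?_, ih⟩
    intro u hu
    rw [List.mem_map] at hu
    obtain ⟨j, -, rfl⟩ := hu
    exact Igen_commute V i j

lemma Iprod_perm {b₁ b₂ : List ℕ} (h : b₁.Perm b₂) : Iprod V b₁ = Iprod V b₂ :=
  List.Perm.prod_eq' (h.map (Igen V)) (pairwise_commute_map_Igen V b₁)

lemma Iprod_zeros {l : List ℕ} (h : ∀ x ∈ l, x = 0) :
    Iprod V l = zElt V 0 ^ l.length := by
  induction l with
  | nil => simp
  | cons i l ih =>
    rw [Iprod_cons, ih (fun x hx => h x (List.mem_cons_of_mem _ hx)),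
      h i (List.mem_cons_self), Igen_zero, List.length_cons, pow_succ']

lemma zword_add0 (m : ℕ) (t : Fin 4 → ℕ) :
    zElt V 0 ^ m * zword V t = zword V (Function.update t 0 (t 0 + m)) := by
  induction m with
  | zero => simp [Function.update_eq_self]
  | succ m ih =>
    rw [pow_succ', mul_assoc, ih, ← zword_update]
    have heq : (Function.update (Function.update t 0 (t 0 + m)) 0
        (Function.update t 0 (t 0 + m) 0 + 1)) = Function.update t 0 (t 0 + (m + 1)) := by
      funext j
      rcases eq_or_ne j 0 with rfl | hj
      · rw [Function.update_self, Function.update_self, Function.update_self]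
        omega
      · rw [Function.update_of_ne hj, Function.update_of_ne hj, Function.update_of_ne hj]
    rw [heq]

/-- sort a list of naturals in non-increasing order -/
def dsort (l : List ℕ) : List ℕ := l.mergeSort (fun x y => decide (x ≥ y))

lemma dsort_sorted (l : List ℕ) : (dsort l).Pairwise (· ≥ ·) := by
  have h := List.pairwise_mergeSort (le := fun x y : ℕ => decide (x ≥ y))
    (fun a b c hab hbc => by simp at *; omega) (fun a b => by simp; omega) l
  exact h.imp (fun {a b} hab => by simpa using hab)

lemma dsort_perm (l : List ℕ) : (dsort l).Perm l := List.mergeSort_perm l _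

variable (ψ : nPlus V →ₗ⁅ℂ⁆ ℂ) (B : Module.Basis WIdx ℂ (Mpsi V ψ)) (hB : IsStdBasis V ψ B)

include hB

lemma keyK : ∀ (N : ℕ) (a : List ℕ), a.length < N → ∀ (t : Fin 4 → ℕ) (b : List ℕ),
    ((zword V t * Lprod V a * Iprod V b) • mw V ψ) ∈ FF V ψ B ((a.sum : ℤ) + (b.sum : ℤ)) := by
  intro N
  induction N with
  | zero => intro a ha; omega
  | succ N ihN =>
    intro a ha t b
    have hsort := sort_mem V a
    refine Submodule.span_induction
      (p := fun u _ => ((zword V t * u * Iprod V b) • mw V ψ) ∈ FF V ψ B ((a.sum : ℤ) + (b.sum : ℤ)))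
      ?hmem ?hzero ?hadd ?hsmul hsort
    case hzero => simp
    case hadd =>
      intro u v _ _ hu hv
      rw [mul_add, add_mul, add_smul]
      exact Submodule.add_mem _ hu hv
    case hsmul =>
      intro c u _ hu
      rw [mul_smul_comm, smul_mul_assoc, smul_assoc]
      exact Submodule.smul_mem _ _ hu
    case hmem =>
      rintro u (⟨c, hcs, hcm, rfl⟩ | ⟨b', hbs, hbl, rfl⟩)
      · -- sorted case: normalize the I-side and identify a basis vector
        set b0 := b.filter (fun x => x == 0) with hb0
        set b1 := b.filter (fun x => !(x == 0)) with hb1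
        set s := dsort b1 with hsdef
        have hperm : b.Perm (b0 ++ s) :=
          ((List.filter_append_perm _ b).symm.trans
            (List.Perm.append_left b0 (dsort_perm b1).symm))
        have hb0z : ∀ x ∈ b0, x = 0 := by
          intro x hx
          rw [hb0, List.mem_filter] at hx
          simpa using hx.2
        have hIb : Iprod V b = zElt V 0 ^ b0.length * Iprod V s := by
          rw [Iprod_perm V hperm, Iprod_append, Iprod_zeros V hb0z]
        have hssort : s.Pairwise (· ≥ ·) := dsort_sorted b1
        have hs0 : (listToF s) 0 = 0 := by
          rw [listToF_apply, List.count_eq_zero]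
          intro hmem
          have := (dsort_perm b1).mem_iff.1 hmem
          rw [hb1, List.mem_filter] at this
          simpa using this.2
        have hgoal : zword V t * Lprod V c * Iprod V b
            = zword V (Function.update t 0 (t 0 + b0.length)) * Lword V (listToF c)
              * Iword V (listToF s) := by
          rw [hIb]
          have c1 : Commute (zElt V 0 ^ b0.length) (Lprod V c) :=
            (central_commute_Lprod V (zElt_commute_iota V 0) c).pow_left _
          have c2 : Commute (zElt V 0 ^ b0.length) (zword V t) :=
            (central_commute_zword V (zElt_commute_iota V 0) t).pow_left _
          calc zword V t * Lprod V c * (zElt V 0 ^ b0.length * Iprod V s)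
              = zword V t * (Lprod V c * zElt V 0 ^ b0.length) * Iprod V s := by
                rw [mul_assoc, mul_assoc, mul_assoc]
            _ = zword V t * (zElt V 0 ^ b0.length * Lprod V c) * Iprod V s := by
                rw [c1.eq]
            _ = (zword V t * zElt V 0 ^ b0.length) * Lprod V c * Iprod V s := by
                rw [← mul_assoc]
            _ = (zElt V 0 ^ b0.length * zword V t) * Lprod V c * Iprod V s := by
                rw [c2.eq]
            _ = _ := by
                rw [zword_add0, Lprod_sorted_eq_Lword V hcs, Iprod_sorted_eq_Iword V hssort]
        rw [hgoal]
        have hbq := hB (Function.update t 0 (t 0 + b0.length)) (listToF c) ⟨listToF s, hs0⟩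
        rw [← hbq]
        apply mem_FF_of_le
        have hc_sum : c.sum = a.sum := by
          have : (c : Multiset ℕ).sum = (a : Multiset ℕ).sum := by rw [hcm]
          simpa using this
        have hs_sum : s.sum = b1.sum := (dsort_perm b1).sum_eq
        have hb_sum : b.sum = b0.sum + b1.sum := by
          have := (List.filter_append_perm (fun x => x == 0) b).sum_eq
          rw [← this, List.sum_append]
        have hb0_sum : b0.sum = 0 := List.sum_eq_zero hb0z
        show (pdeg (listToF c) : ℤ) + (pdeg (listToF s) : ℤ) ≤ _
        rw [pdeg_listToF, pdeg_listToF, hc_sum, hs_sum]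
        omega
      · -- shorter list
        have h1 := ihN b' (by omega) t b
        rw [hbs] at h1
        exact h1

lemma keyK' (a : List ℕ) (t : Fin 4 → ℕ) (b : List ℕ) :
    ((zword V t * Lprod V a * Iprod V b) • mw V ψ) ∈ FF V ψ B ((a.sum : ℤ) + (b.sum : ℤ)) :=
  keyK V ψ B hB (a.length + 1) a (by omega) t b

end Aux6

section Aux7
open THV List
set_option linter.unusedSectionVars false
variable (V : Type) [LieRing V] [LieAlgebra ℂ V] [THV V]

@[simp] lemma Lgen_def (i : ℕ) : Lgen V i = ιV V (L (-(i:ℤ))) := rfl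
@[simp] lemma Igen_def (i : ℕ) : Igen V i = ιV V (I (-(i:ℤ))) := rfl
lemma zElt_def1 : zElt V 1 = ιV V (z 0) := rfl
lemma zElt_def2 : zElt V 2 = ιV V (z 1) := rfl

lemma iota_commute_zword (x : V) (t : Fin 4 → ℕ) : Commute (ιV V x) (zword V t) := by
  apply commute_listprod
  intro y hy
  rw [List.mem_map] at hy
  obtain ⟨i, -, rfl⟩ := hy
  exact ((zElt_commute_iota V i x).symm).pow_right _

variable (ψ : nPlus V →ₗ⁅ℂ⁆ ℂ) (B : Module.Basis WIdx ℂ (Mpsi V ψ)) (hB : IsStdBasis V ψ B)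

example : SMulCommClass ℂ (UEA V) (Mpsi V ψ) := inferInstance

include hB

lemma keyK2 (a b : List ℕ) :
    ((Lprod V a * Iprod V b) • mw V ψ) ∈ FF V ψ B ((a.sum : ℤ) + (b.sum : ℤ)) := by
  have h := keyK' V ψ B hB a (fun _ => 0) b
  rwa [zword_zero, one_mul] at h

lemma keyKW (f : ℕ →₀ ℕ) (b : List ℕ) :
    ((Lword V f * Iprod V b) • mw V ψ) ∈ FF V ψ B ((pdeg f : ℤ) + (b.sum : ℤ)) := by
  have h := keyK2 V ψ B hB (cList f (f.support.sup id + 1)) b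
  rw [← Lword_eq_Lprod] at h
  rwa [cList_sum f _ (fun i hi => support_lt f hi)] at h

lemma actZ (j : Fin 4) {d : ℤ} {v : Mpsi V ψ} (hv : v ∈ FF V ψ B d) :
    (zElt V j) • v ∈ FF V ψ B d := by
  refine Submodule.span_induction (p := fun u _ => (zElt V j) • u ∈ FF V ψ B d)
    ?hmem ?hzero ?hadd ?hsmul hv
  case hzero => simp
  case hadd =>
    intro u v _ _ hu hv'
    rw [smul_add]
    exact Submodule.add_mem _ hu hv'
  case hsmul =>
    intro c u _ hu
    rw [smul_comm]
    exact Submodule.smul_mem _ _ hu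
  case hmem =>
    rintro u ⟨p, hp, rfl⟩
    obtain ⟨t, f, g⟩ := p
    rw [hB t f g, smul_smul, ← mul_assoc, ← mul_assoc, ← zword_update, mul_assoc]
    rw [show zword V (Function.update t j (t j + 1)) * (Lword V f * Iword V g.1)
        = zword V (Function.update t j (t j + 1)) * Lword V f * Iword V g.1 from by
      rw [mul_assoc]]
    rw [← hB (Function.update t j (t j + 1)) f g]
    exact mem_FF_of_le V ψ B hp

lemma actL (i : ℕ) {d : ℤ} {v : Mpsi V ψ} (hv : v ∈ FF V ψ B d) :
    (Lgen V i) • v ∈ FF V ψ B (d + i) := by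
  refine Submodule.span_induction (p := fun u _ => (Lgen V i) • u ∈ FF V ψ B (d + i))
    ?hmem ?hzero ?hadd ?hsmul hv
  case hzero => simp
  case hadd =>
    intro u v _ _ hu hv'
    rw [smul_add]
    exact Submodule.add_mem _ hu hv'
  case hsmul =>
    intro c u _ hu
    rw [smul_comm]
    exact Submodule.smul_mem _ _ hu
  case hmem =>
    rintro u ⟨p, hp, rfl⟩
    obtain ⟨t, f, g⟩ := p
    rw [hB t f g, smul_smul]
    have hcz : Lgen V i * zword V t = zword V t * Lgen V i :=
      (iota_commute_zword V (L (-(i:ℤ))) t).eq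
    have hrw : Lgen V i * (zword V t * Lword V f * Iword V g.1)
        = zword V t * (Lgen V i * Lword V f) * Iword V g.1 := by
      rw [← mul_assoc, ← mul_assoc, ← mul_assoc, hcz]
    rw [hrw]
    have hLw : Lgen V i * Lword V f = Lprod V (i :: cList f (f.support.sup id + 1)) := by
      rw [Lword_eq_Lprod, Lprod_cons]
    rw [hLw, Iword_eq_Iprod]
    have h := keyK' V ψ B hB (i :: cList f (f.support.sup id + 1)) t
      (cList g.1 (g.1.support.sup id + 1))
    refine FF_mono V ψ B ?_ h
    rw [List.sum_cons, cList_sum f _ (fun m hm => support_lt f hm),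
      cList_sum g.1 _ (fun m hm => support_lt g.1 hm)]
    have hdeg : (pdeg f : ℤ) + (pdeg g.1 : ℤ) ≤ d := hp
    push_cast
    omega

end Aux7

section Aux8
open THV List
set_option linter.unusedSectionVars false
variable (V : Type) [LieRing V] [LieAlgebra ℂ V] [THV V]
variable (ψ : nPlus V →ₗ⁅ℂ⁆ ℂ) (B : Module.Basis WIdx ℂ (Mpsi V ψ)) (hB : IsStdBasis V ψ B)

include hB

lemma keyK3 (j : ℕ) (a b : List ℕ) :
    ((ιV V (L (-(j:ℤ))) * (Lprod V a * Iprod V b)) • mw V ψ)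
      ∈ FF V ψ B ((j:ℤ) + (a.sum : ℤ) + (b.sum : ℤ)) := by
  have h := keyK2 V ψ B hB (j :: a) b
  rw [Lprod_cons, Lgen_def, mul_assoc] at h
  refine FF_mono V ψ B ?_ h
  simp only [List.sum_cons]
  push_cast
  omega

lemma keyK4 (f : ℕ →₀ ℕ) (j : ℕ) (c b : List ℕ) :
    ((Lword V f * (Iprod V c * (ιV V (I (-(j:ℤ))) * Iprod V b))) • mw V ψ)
      ∈ FF V ψ B ((pdeg f : ℤ) + (c.sum : ℤ) + (j:ℤ) + (b.sum : ℤ)) := by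
  have h := keyKW V ψ B hB f (c ++ j :: b)
  rw [Iprod_append, Iprod_cons, Igen_def] at h
  refine FF_mono V ψ B ?_ h
  simp only [List.sum_append, List.sum_cons]
  push_cast
  omega

lemma keyKz1 (m : Fin 4) (a b : List ℕ) :
    ((zElt V m * (Lprod V a * Iprod V b)) • mw V ψ)
      ∈ FF V ψ B ((a.sum : ℤ) + (b.sum : ℤ)) := by
  rw [mul_smul]
  exact actZ V ψ B hB m (keyK2 V ψ B hB a b)

lemma keyKz2 (m : Fin 4) (f : ℕ →₀ ℕ) (c b : List ℕ) :
    ((Lword V f * (Iprod V c * (zElt V m * Iprod V b))) • mw V ψ)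
      ∈ FF V ψ B ((pdeg f : ℤ) + (c.sum : ℤ) + (b.sum : ℤ)) := by
  have hzc : ∀ y : V, Commute (zElt V m) (ιV V y) := zElt_commute_iota V m
  have hmove : Lword V f * (Iprod V c * (zElt V m * Iprod V b))
      = zElt V m * (Lword V f * Iprod V (c ++ b)) := by
    rw [Iprod_append]
    have h1 : Iprod V c * (zElt V m * Iprod V b) = zElt V m * (Iprod V c * Iprod V b) := by
      rw [← mul_assoc, (central_commute_Iprod V hzc c).eq.symm, mul_assoc]
    rw [h1, ← mul_assoc, (central_commute_Lword V hzc f).eq.symm, mul_assoc]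
  rw [hmove, mul_smul]
  have h := keyKW V ψ B hB f (c ++ b)
  rw [List.sum_append] at h
  refine actZ V ψ B hB m (FF_mono V ψ B ?_ h)
  push_cast
  omega

lemma MBL (k : ℕ) : ∀ (a : List ℕ), (∀ i ∈ a, k + 1 ≤ i) → ∀ (b : List ℕ),
    ((⁅ιV V (L ((k:ℤ)+1)), Lprod V a⁆ * Iprod V b) • mw V ψ) ∈
      FF V ψ B ((a.sum : ℤ) + (b.sum : ℤ) - ((k:ℤ)+1)) := by
  intro a
  induction a with
  | nil =>
    intro _ b
    have h0 : ⁅ιV V (L ((k:ℤ)+1)), Lprod V []⁆ = 0 := by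
      rw [Lprod_nil, Ring.lie_def, mul_one, one_mul, sub_self]
    rw [h0, zero_mul, zero_smul]
    exact Submodule.zero_mem _
  | cons i a ih =>
    intro ha b
    have hia : k + 1 ≤ i := ha i (List.mem_cons_self)
    have hrest : ∀ j ∈ a, k + 1 ≤ j := fun j hj => ha j (List.mem_cons_of_mem _ hj)
    rw [Lprod_cons]
    have hder : ⁅ιV V (L ((k:ℤ)+1)), Lgen V i * Lprod V a⁆
        = ⁅ιV V (L ((k:ℤ)+1)), Lgen V i⁆ * Lprod V a
          + Lgen V i * ⁅ιV V (L ((k:ℤ)+1)), Lprod V a⁆ := by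
      simp only [Ring.lie_def]
      noncomm_ring
    rw [hder, add_mul, add_smul]
    refine Submodule.add_mem _ ?_ ?_
    · -- head term
      have hbr := iota_lie V (L ((k:ℤ)+1)) (L (-(i:ℤ)))
      rw [lie_LL] at hbr
      have harg : ((k:ℤ)+1) + (-(i:ℤ)) = -(((i - (k+1) : ℕ)) : ℤ) := by
        push_cast [Nat.cast_sub hia]
        ring
      rw [harg] at hbr
      rw [Lgen_def V i, hbr]
      by_cases hik : i = k + 1
      · have hcond : (-(i:ℤ)) = -((k:ℤ)+1) := by omega
        rw [if_pos hcond, map_add, map_smul, map_smul]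
        rw [add_mul, add_mul, add_smul]
        refine Submodule.add_mem _ ?_ ?_
        · rw [smul_mul_assoc, smul_mul_assoc, smul_assoc, mul_assoc]
          refine Submodule.smul_mem _ _ ?_
          have h := keyK3 V ψ B hB (i - (k+1)) a b
          refine FF_mono V ψ B ?_ h
          rw [List.sum_cons]
          push_cast [Nat.cast_sub hia]
          omega
        · rw [smul_mul_assoc, smul_mul_assoc, smul_assoc, mul_assoc]
          refine Submodule.smul_mem _ _ ?_
          have h := keyKz1 V ψ B hB 1 a b
          rw [zElt_def1] at h
          refine FF_mono V ψ B ?_ h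
          rw [List.sum_cons]
          push_cast
          omega
      · have hcond : ¬ ((-(i:ℤ)) = -((k:ℤ)+1)) := by
          intro hcc
          exact hik (by omega)
        rw [if_neg hcond, zero_smul, add_zero, map_smul]
        rw [smul_mul_assoc, smul_mul_assoc, smul_assoc, mul_assoc]
        refine Submodule.smul_mem _ _ ?_
        have h := keyK3 V ψ B hB (i - (k+1)) a b
        refine FF_mono V ψ B ?_ h
        rw [List.sum_cons]
        push_cast [Nat.cast_sub hia]
        omega
    · -- tail term
      rw [mul_assoc, mul_smul]
      have h := actL V ψ B hB i (ih hrest b)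
      refine FF_mono V ψ B ?_ h
      rw [List.sum_cons]
      push_cast
      omega

lemma MBI (k : ℕ) : ∀ (b : List ℕ), (∀ i ∈ b, k + 1 ≤ i) → ∀ (c : List ℕ) (f : ℕ →₀ ℕ),
    ((Lword V f * (Iprod V c * ⁅ιV V (L ((k:ℤ)+1)), Iprod V b⁆)) • mw V ψ) ∈
      FF V ψ B ((pdeg f : ℤ) + (c.sum : ℤ) + (b.sum : ℤ) - ((k:ℤ)+1)) := by
  intro b
  induction b with
  | nil =>
    intro _ c f
    have h0 : ⁅ιV V (L ((k:ℤ)+1)), Iprod V []⁆ = 0 := by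
      rw [Iprod_nil, Ring.lie_def, mul_one, one_mul, sub_self]
    rw [h0, mul_zero, mul_zero, zero_smul]
    exact Submodule.zero_mem _
  | cons i b ih =>
    intro hb c f
    have hib : k + 1 ≤ i := hb i (List.mem_cons_self)
    have hrest : ∀ j ∈ b, k + 1 ≤ j := fun j hj => hb j (List.mem_cons_of_mem _ hj)
    rw [Iprod_cons]
    have hder : ⁅ιV V (L ((k:ℤ)+1)), Igen V i * Iprod V b⁆
        = ⁅ιV V (L ((k:ℤ)+1)), Igen V i⁆ * Iprod V b
          + Igen V i * ⁅ιV V (L ((k:ℤ)+1)), Iprod V b⁆ := by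
      simp only [Ring.lie_def]
      noncomm_ring
    rw [hder, mul_add, mul_add, add_smul]
    refine Submodule.add_mem _ ?_ ?_
    · -- head term
      have hbr := iota_lie V (L ((k:ℤ)+1)) (I (-(i:ℤ)))
      rw [lie_LI] at hbr
      have harg : ((k:ℤ)+1) + (-(i:ℤ)) = -(((i - (k+1) : ℕ)) : ℤ) := by
        push_cast [Nat.cast_sub hib]
        ring
      rw [harg] at hbr
      rw [Igen_def V i, hbr]
      by_cases hik : i = k + 1
      · have hcond : (-(i:ℤ)) = -((k:ℤ)+1) := by omega
        rw [if_pos hcond, map_add, map_smul, map_smul]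
        rw [add_mul, mul_add, mul_add, add_smul]
        refine Submodule.add_mem _ ?_ ?_
        · rw [smul_mul_assoc, mul_smul_comm, mul_smul_comm, smul_assoc]
          refine Submodule.smul_mem _ _ ?_
          have h := keyK4 V ψ B hB f (i - (k+1)) c b
          refine FF_mono V ψ B ?_ h
          simp only [List.sum_cons]
          push_cast [Nat.cast_sub hib]
          omega
        · rw [smul_mul_assoc, mul_smul_comm, mul_smul_comm, smul_assoc]
          refine Submodule.smul_mem _ _ ?_
          have h := keyKz2 V ψ B hB 2 f c b
          rw [zElt_def2] at h
          refine FF_mono V ψ B ?_ h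
          simp only [List.sum_cons]
          push_cast
          omega
      · have hcond : ¬ ((-(i:ℤ)) = -((k:ℤ)+1)) := by
          intro hcc
          exact hik (by omega)
        rw [if_neg hcond, zero_smul, add_zero, map_smul]
        rw [smul_mul_assoc, mul_smul_comm, mul_smul_comm, smul_assoc]
        refine Submodule.smul_mem _ _ ?_
        have h := keyK4 V ψ B hB f (i - (k+1)) c b
        refine FF_mono V ψ B ?_ h
        simp only [List.sum_cons]
        push_cast [Nat.cast_sub hib]
        omega
    · -- tail term
      have hshape : Lword V f * (Iprod V c * (Igen V i * ⁅ιV V (L ((k:ℤ)+1)), Iprod V b⁆))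
          = Lword V f * (Iprod V (c ++ [i]) * ⁅ιV V (L ((k:ℤ)+1)), Iprod V b⁆) := by
        rw [Iprod_append, Iprod_cons, Iprod_nil, mul_one, mul_assoc]
      rw [hshape]
      have h := ih hrest (c ++ [i]) f
      refine FF_mono V ψ B ?_ h
      simp only [List.sum_append, List.sum_cons, List.sum_nil]
      push_cast
      omega

end Aux8


end THV

open THV in
/-- if `μ(i) = λ(i) = 0` for all `0 ≤ i ≤ k` then
`maxdeg([L_{k+1}, L_{−λ}I_{−μ}]w) ≤ |λ| + |μ| − k − 1`. -/
theorem maxdeg_bracket_L_succ_le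
    (V : Type) [LieRing V] [LieAlgebra ℂ V] [THV V]
    (ψ : nPlus V →ₗ⁅ℂ⁆ ℂ)
    (hL1 : ψ ⟨THV.L 1, L_mem_nPlus V le_rfl⟩ ≠ 0)
    (hL2 : ψ ⟨THV.L 2, L_mem_nPlus V one_le_two⟩ ≠ 0)
    (hI1 : ψ ⟨THV.I 1, I_mem_nPlus V le_rfl⟩ ≠ 0)
    (B : Module.Basis WIdx ℂ (Mpsi V ψ)) (hB : IsStdBasis V ψ B)
    (k : ℕ) (lam : ℕ →₀ ℕ) (mu : ℕ →₀ ℕ) (hmu : mu 0 = 0)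
    (hvanish : ∀ i ≤ k, lam i = 0 ∧ mu i = 0) :
    maxdeg V ψ B (⁅ιV V (THV.L ((k : ℤ) + 1)), Lword V lam * Iword V mu⁆ • mw V ψ)
      ≤ (((pdeg lam : ℤ) + (pdeg mu : ℤ) - (k : ℤ) - 1 : ℤ) : WithBot ℤ) := by
  refine maxdeg_le_of_mem_FF V ψ B ?_
  have hlam_entries : ∀ i ∈ cList lam (lam.support.sup id + 1), k + 1 ≤ i := by
    intro i hi
    have hpos := mem_cList hi
    rcases le_or_gt i k with hik | hik
    · have := (hvanish i hik).1
      omega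
    · omega
  have hmu_entries : ∀ i ∈ cList mu (mu.support.sup id + 1), k + 1 ≤ i := by
    intro i hi
    have hpos := mem_cList hi
    rcases le_or_gt i k with hik | hik
    · have := (hvanish i hik).2
      omega
    · omega
  have hder : ⁅ιV V (THV.L ((k : ℤ) + 1)), Lword V lam * Iword V mu⁆
      = ⁅ιV V (THV.L ((k : ℤ) + 1)), Lword V lam⁆ * Iword V mu
        + Lword V lam * ⁅ιV V (THV.L ((k : ℤ) + 1)), Iword V mu⁆ := by
    simp only [Ring.lie_def]
    noncomm_ring
  rw [hder, add_smul]
  refine Submodule.add_mem _ ?_ ?_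
  · rw [Lword_eq_Lprod, Iword_eq_Iprod]
    have h := MBL V ψ B hB k (cList lam (lam.support.sup id + 1)) hlam_entries
      (cList mu (mu.support.sup id + 1))
    refine FF_mono V ψ B ?_ h
    rw [cList_sum lam _ (fun i hi => support_lt lam hi),
      cList_sum mu _ (fun i hi => support_lt mu hi)]
    push_cast
    omega
  · rw [Iword_eq_Iprod]
    have h := MBI V ψ B hB k (cList mu (mu.support.sup id + 1)) hmu_entries [] lam
    rw [Iprod_nil, one_mul] at h
    refine FF_mono V ψ B ?_ h
    rw [cList_sum mu _ (fun i hi => support_lt mu hi)]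
    simp only [List.sum_nil]
    push_cast
    omega
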